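/- For n ≥ 3, the Houghton group H_n is generated by the shifts s_1, ..., s_n; in particular the commutator [s_i, s_{i+1}] acts as the transposition of the points (0, i) and (0, i+1), so the subgroup generated by the shifts contains all finitary permutations of the underlying set. -/

import Mathlib

/-- The set of elements of `Equiv.Perm (ℕ × Fin n)` belonging to the Houghton
group `H_n`: permutations `φ` of the disjoint union of `n` copies of `ℕ` for
which there are integers `t 1, …, t n` with `φ (k, l) = (k + t l, l)` for all
but finitely many points `(k, l)`. -/
def houghtonSet (n : ℕ) : Set (Equiv.Perm (ℕ × Fin n)) :=
  {φ | ∃ t : Fin n → ℤ,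
    {p : ℕ × Fin n |
      ¬((0 : ℤ) ≤ (p.1 : ℤ) + t p.2 ∧ φ p = (((p.1 : ℤ) + t p.2).toNat, p.2))}.Finite}


open Equiv Equiv.Perm


def hprop {n : ℕ} (φ : Equiv.Perm (ℕ × Fin n)) (t : Fin n → ℤ) : Prop :=
  {p : ℕ × Fin n |
    ¬((0 : ℤ) ≤ (p.1 : ℤ) + t p.2 ∧ φ p = (((p.1 : ℤ) + t p.2).toNat, p.2))}.Finite

lemma hprop_one {n : ℕ} : hprop (1 : Equiv.Perm (ℕ × Fin n)) 0 := by
  apply Set.Finite.subset (Set.finite_empty)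
  intro p hp
  exact absurd ⟨by simp, by simp⟩ hp

lemma hprop_mul {n : ℕ} {φ ψ : Equiv.Perm (ℕ × Fin n)} {t u : Fin n → ℤ}
    (hφ : hprop φ t) (hψ : hprop ψ u) : hprop (φ * ψ) (t + u) := by
  apply Set.Finite.subset (hψ.union (hφ.preimage (Set.injOn_of_injective ψ.injective)))
  intro p hp
  by_contra h
  simp only [Set.mem_union, Set.mem_preimage, Set.mem_setOf_eq, not_or, not_not] at h
  obtain ⟨⟨h1, h2⟩, h3, h4⟩ := h
  apply hp
  rw [h2] at h3 h4
  simp only at h3 h4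
  have key : (((((p.1 : ℤ) + u p.2).toNat : ℕ) : ℤ)) = (p.1 : ℤ) + u p.2 := Int.toNat_of_nonneg h1
  rw [key] at h3 h4
  constructor
  · rw [Pi.add_apply]; omega
  · show φ (ψ p) = _
    rw [h2, h4, Pi.add_apply]
    exact Prod.ext_iff.mpr ⟨by omega, rfl⟩

lemma hprop_inv {n : ℕ} {φ : Equiv.Perm (ℕ × Fin n)} {t : Fin n → ℤ}
    (hφ : hprop φ t) : hprop φ⁻¹ (-t) := by
  apply Set.Finite.subset (hφ.image φ)
  intro q hq
  by_contra h
  apply hq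
  have hp : φ⁻¹ q ∉ _ := fun hm => h ⟨φ⁻¹ q, hm, by simp⟩
  simp only [Set.mem_setOf_eq, not_not] at hp
  obtain ⟨h1, h2⟩ := hp
  have hq2 : q = ((((φ⁻¹ q).1 : ℤ) + t (φ⁻¹ q).2).toNat, (φ⁻¹ q).2) := by
    conv_lhs => rw [← Equiv.apply_symm_apply φ q]
    exact h2
  have e2 : q.2 = (φ⁻¹ q).2 := (Prod.ext_iff.mp hq2).2
  have e1 : (q.1 : ℤ) = ((φ⁻¹ q).1 : ℤ) + t (φ⁻¹ q).2 := by
    rw [(Prod.ext_iff.mp hq2).1, Int.toNat_of_nonneg h1]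
  constructor
  · rw [Pi.neg_apply, e2]; omega
  · have e3 : (q.1 : ℤ) + (-t) q.2 = (((φ⁻¹ q).1 : ℕ) : ℤ) := by rw [Pi.neg_apply, e2]; omega
    rw [e3, Int.toNat_natCast]
    exact Prod.ext_iff.mpr ⟨rfl, e2.symm⟩

lemma hprop_zpow {n : ℕ} {φ : Equiv.Perm (ℕ × Fin n)} {t : Fin n → ℤ}
    (hφ : hprop φ t) (a : ℤ) : hprop (φ ^ a) (a • t) := by
  induction a using Int.induction_on with
  | zero => rw [zpow_zero, zero_smul]; exact hprop_one
  | succ k ih =>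
      rw [zpow_add_one]
      have := hprop_mul ih hφ
      convert this using 1
      module
  | pred k ih =>
      rw [zpow_sub_one]
      have := hprop_mul ih (hprop_inv hφ)
      convert this using 1
      module

lemma hprop_neg_absurd {n : ℕ} {ρ : Equiv.Perm (ℕ × Fin n)} {r : Fin n → ℤ}
    (hr : hprop ρ r) (l₀ : Fin n) (h0 : ∀ l, l ≠ l₀ → r l = 0) (hneg : r l₀ < 0) : False := by
  classical
  set F := hr.toFinset with hF
  set B := F.sup (fun p => p.1) + F.sup (fun p => (ρ p).1) with hB
  set M := B + 1 with hM
  set Box : Finset (ℕ × Fin n) := Finset.range M ×ˢ Finset.univ with hBox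
  have memBox : ∀ q : ℕ × Fin n, q ∈ Box ↔ q.1 < M := by
    intro q; simp [hBox, Finset.mem_product]
  have good : ∀ q : ℕ × Fin n, q ∉ F →
      (0 : ℤ) ≤ (q.1 : ℤ) + r q.2 ∧ ρ q = (((q.1 : ℤ) + r q.2).toNat, q.2) := by
    intro q hq
    have := (Set.Finite.mem_toFinset hr).not.mp hq
    simpa [Set.mem_setOf_eq, not_not] using this
  have claim1 : ∀ q ∈ Box, ρ q ∈ Box := by
    intro q hq
    rw [memBox] at hq ⊢
    by_cases hqF : q ∈ F
    · have := Finset.le_sup (f := fun p => (ρ p).1) hqF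
      omega
    · obtain ⟨g1, g2⟩ := good q hqF
      rw [g2]
      show ((q.1 : ℤ) + r q.2).toNat < M
      by_cases hl : q.2 = l₀
      · rw [hl]; omega
      · rw [h0 _ hl]; omega
  have himg : Finset.image (fun q => ρ q) Box = Box := by
    apply Finset.eq_of_subset_of_card_le
    · intro q hq
      obtain ⟨p, hp, rfl⟩ := Finset.mem_image.mp hq
      exact claim1 p hp
    · rw [Finset.card_image_of_injective _ ρ.injective]
  have hpsF : ((B + (-r l₀).toNat, l₀) : ℕ × Fin n) ∉ F := by
    intro hmem
    have h2 := Finset.le_sup (f := fun p : ℕ × Fin n => p.1) hmem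
    dsimp only at h2
    omega
  obtain ⟨g1, g2⟩ := good _ hpsF
  have hval : (((B + (-r l₀).toNat : ℕ) : ℤ) + r l₀) = (B : ℤ) := by
    push_cast
    omega
  have hmem : ρ (B + (-r l₀).toNat, l₀) ∈ Box := by
    rw [memBox, g2]
    show (((B + (-r l₀).toNat : ℕ) : ℤ) + r l₀).toNat < M
    rw [hval]
    omega
  rw [← himg, Finset.mem_image] at hmem
  obtain ⟨q, hq, hq2⟩ := hmem
  have heq : q = (B + (-r l₀).toNat, l₀) := ρ.injective hq2
  rw [heq, memBox] at hq
  have h1 : 1 ≤ (-r l₀).toNat := by omega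
  dsimp only at hq
  omega

section
variable {m : ℕ}

lemma fin_aux {a c : ℕ} (hc : 0 < c) (hc2 : c < m + 3) (h1 : a < m + 3)
    (h2 : (a + c) % (m+3) = a) : False := by
  rcases Nat.lt_or_ge (a + c) (m + 3) with h | h
  · rw [Nat.mod_eq_of_lt h] at h2; omega
  · rw [Nat.mod_eq_sub_mod h, Nat.mod_eq_of_lt (by omega)] at h2; omega

lemma finp1 (i : Fin (m + 3)) : i + 1 ≠ i := by
  intro h
  have h2 := congrArg Fin.val h
  have e1 : 1 % (m + 3) = 1 := Nat.mod_eq_of_lt (by omega)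
  rw [Fin.val_add, Fin.val_one', e1] at h2
  exact fin_aux (by omega) (by omega) i.isLt h2

lemma finp2 (i : Fin (m + 3)) : i + 2 ≠ i := by
  intro h
  have h2 := congrArg Fin.val h
  have e : ((2 : Fin (m+3)) : ℕ) = 2 := by simp
  rw [Fin.val_add, e] at h2
  exact fin_aux (by omega) (by omega) i.isLt h2

open Fin.CommRing Fin.NatCast in
lemma fin_i2 (i : Fin (m+3)) : i + 1 + 1 = i + 2 := by ring

end

section
variable {m : ℕ} {s : Fin (m + 3) → Equiv.Perm (ℕ × Fin (m + 3))}
variable (hs0 : ∀ i : Fin (m + 3), s i (0, i) = (0, i + 1))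
  (hs1 : ∀ (i : Fin (m + 3)) (k : ℕ), s i (k + 1, i) = (k, i))
  (hs2 : ∀ (i : Fin (m + 3)) (k : ℕ), s i (k, i + 1) = (k + 1, i + 1))
  (hs3 : ∀ (i : Fin (m + 3)) (k : ℕ) (l : Fin (m + 3)),
      l ≠ i → l ≠ i + 1 → s i (k, l) = (k, l))

-- inverse value lemmas
include hs0 in
lemma sinv0 (i : Fin (m + 3)) : (s i)⁻¹ (0, i + 1) = (0, i) := by
  rw [Equiv.Perm.inv_eq_iff_eq]; exact (hs0 i).symm

include hs1 in
lemma sinv1 (i : Fin (m + 3)) (k : ℕ) : (s i)⁻¹ (k, i) = (k + 1, i) := by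
  rw [Equiv.Perm.inv_eq_iff_eq]; exact (hs1 i k).symm

include hs2 in
lemma sinv2 (i : Fin (m + 3)) (k : ℕ) : (s i)⁻¹ (k + 1, i + 1) = (k, i + 1) := by
  rw [Equiv.Perm.inv_eq_iff_eq]; exact (hs2 i k).symm

include hs3 in
lemma sinv3 (i : Fin (m + 3)) (k : ℕ) (l : Fin (m + 3)) (h1 : l ≠ i) (h2 : l ≠ i + 1) :
    (s i)⁻¹ (k, l) = (k, l) := by
  rw [Equiv.Perm.inv_eq_iff_eq]; exact (hs3 i k l h1 h2).symm

include hs0 hs1 hs2 hs3 in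
lemma comm_eq_swap (i : Fin (m + 3)) :
    (s i)⁻¹ * (s (i + 1))⁻¹ * s i * s (i + 1)
        = Equiv.swap ((0 : ℕ), i) ((0 : ℕ), i + 1) := by
  have n1 : i + 1 ≠ i := finp1 i
  have n2 : i + 2 ≠ i := finp2 i
  have n3 : i + 2 ≠ i + 1 := by rw [← fin_i2]; exact finp1 (i+1)
  have n1' : i ≠ i + 1 := fun h => n1 h.symm
  have n2' : i + 1 ≠ i + 2 := fun h => n3 h.symm
  apply Equiv.ext
  rintro ⟨k, l⟩
  simp only [Equiv.Perm.mul_apply]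
  by_cases hl : l = i
  · subst hl
    rcases k with _ | k'
    · rw [hs3 (l+1) 0 l n1' (by rw [fin_i2]; exact fun h => n2 h.symm),
        hs0 l, sinv1 hs1 (l+1) 0, sinv2 hs2 l 0, Equiv.swap_apply_left]
    · rw [hs3 (l+1) (k'+1) l n1' (by rw [fin_i2]; exact fun h => n2 h.symm),
        hs1 l k', sinv3 hs3 (l+1) k' l n1' (by rw [fin_i2]; exact fun h => n2 h.symm),
        sinv1 hs1 l k',
        Equiv.swap_apply_of_ne_of_ne (by simp) (by simp [n1'])]
  · by_cases hl2 : l = i + 1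
    · subst hl2
      rcases k with _ | k'
      · rw [hs0 (i+1), hs3 i 0 (i+1+1) (by rw [fin_i2]; exact n2) (by rw [fin_i2]; exact n3),
          sinv0 hs0 (i+1), sinv0 hs0 i, Equiv.swap_apply_right]
      · rw [hs1 (i+1) k', hs2 i k', sinv1 hs1 (i+1) (k'+1), sinv2 hs2 i (k'+1),
          Equiv.swap_apply_of_ne_of_ne (by simp [n1]) (by simp)]
    · by_cases hl3 : l = i + 2
      · subst hl3
        rw [← fin_i2 i]
        rw [hs2 (i+1) k,
          hs3 i (k+1) (i+1+1) (by rw [fin_i2]; exact n2) (by rw [fin_i2]; exact n3),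
          sinv2 hs2 (i+1) k,
          sinv3 hs3 i k (i+1+1) (by rw [fin_i2]; exact n2) (by rw [fin_i2]; exact n3),
          Equiv.swap_apply_of_ne_of_ne (by simp [fin_i2, hl]) (by simp [fin_i2, hl2])]
      · have hl4 : l ≠ i + 1 + 1 := by rw [fin_i2]; exact hl3
        rw [hs3 (i+1) k l hl2 hl4, hs3 i k l hl hl2, sinv3 hs3 (i+1) k l hl2 hl4,
          sinv3 hs3 i k l hl hl2,
          Equiv.swap_apply_of_ne_of_ne (by simp [hl]) (by simp [hl2])]

end

section generic
variable {α : Type*} [DecidableEq α] {S : Subgroup (Equiv.Perm α)}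

/-- conjugated swap stays in subgroup -/
lemma swap_conj_mem {w : Equiv.Perm α} (hw : w ∈ S) {a b : α}
    (hab : Equiv.swap a b ∈ S) : Equiv.swap (w a) (w b) ∈ S := by
  rw [Equiv.swap_apply_apply]
  exact S.mul_mem (S.mul_mem hw hab) (S.inv_mem hw)

def srel (S : Subgroup (Equiv.Perm α)) (a b : α) : Prop := a = b ∨ Equiv.swap a b ∈ S

lemma srel_refl (a : α) : srel S a a := Or.inl rfl

lemma srel_symm {a b : α} (h : srel S a b) : srel S b a := by
  rcases h with h | h
  · exact Or.inl h.symm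
  · rw [Equiv.swap_comm] at h; exact Or.inr h

lemma srel_trans {a b c : α} (h1 : srel S a b) (h2 : srel S b c) : srel S a c := by
  rcases h1 with h1 | h1
  · rwa [h1]
  · rcases h2 with h2 | h2
    · rw [← h2]; exact Or.inr h1
    · by_cases hac : a = c
      · exact Or.inl hac
      · by_cases hbc : b = c
        · subst hbc; exact Or.inr h1
        · right
          have key : Equiv.swap (Equiv.swap a b b) (Equiv.swap a b c) ∈ S :=
            swap_conj_mem h1 h2
          rwa [Equiv.swap_apply_right,
            Equiv.swap_apply_of_ne_of_ne (Ne.symm hac) (Ne.symm hbc)] at key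

lemma srel_swap_mem {a b : α} (h : srel S a b) (hne : a ≠ b) : Equiv.swap a b ∈ S := by
  rcases h with h | h
  · exact absurd h hne
  · exact h

/-- finitary permutations lie in any subgroup containing all transpositions -/
lemma finitary_mem_of_swaps (hswap : ∀ a b : α, a ≠ b → Equiv.swap a b ∈ S) :
    ∀ (N : ℕ) (φ : Equiv.Perm α) (F : Finset α), F.card ≤ N →
      {p | φ p ≠ p} ⊆ (F : Set α) → φ ∈ S := by
  intro N
  induction N with
  | zero =>
      intro φ F hcard hsub
      have : φ = 1 := by
        ext p
        by_contra hp
        have : p ∈ (F : Set α) := hsub hp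
        rw [Finset.card_eq_zero.mp (Nat.le_zero.mp hcard)] at this
        simp at this
      rw [this]; exact S.one_mem
  | succ N ih =>
      intro φ F hcard hsub
      by_cases hφ : φ = 1
      · rw [hφ]; exact S.one_mem
      · obtain ⟨a, ha⟩ : ∃ a, φ a ≠ a := by
          by_contra h
          push_neg at h
          exact hφ (Equiv.ext h)
        have hba : φ a ≠ a := ha
        have haF : a ∈ F := hsub ha
        have hsub' : {p | (Equiv.swap a (φ a) * φ) p ≠ p} ⊆ ((F.erase a : Finset α) : Set α) := by
          intro x hx
          have hx' : Equiv.swap a (φ a) (φ x) ≠ x := hx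
          have hxa : x ≠ a := by
            intro h; subst h
            exact hx' (by rw [Equiv.swap_apply_right])
          have hφx : φ x ≠ x := by
            intro h
            rw [h] at hx'
            have hxb : x ≠ φ a := by
              intro hh
              exact hxa (φ.injective (h.trans hh))
            exact hx' (Equiv.swap_apply_of_ne_of_ne hxa hxb)
          simp only [Finset.coe_erase, Set.mem_diff, Set.mem_singleton_iff]
          exact ⟨hsub hφx, hxa⟩
        have hφ' : Equiv.swap a (φ a) * φ ∈ S := by
          have hcard' : (F.erase a).card ≤ N := by
            have h1 := Finset.card_erase_of_mem haF
            have h2 := Finset.card_pos.mpr ⟨a, haF⟩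
            omega
          exact ih _ _ hcard' hsub'
        have hsw : Equiv.swap a (φ a) ∈ S := hswap a (φ a) (Ne.symm ha)
        have : φ = Equiv.swap a (φ a) * (Equiv.swap a (φ a) * φ) := by
          rw [← mul_assoc, Equiv.swap_mul_self, one_mul]
        rw [this]
        exact S.mul_mem hsw hφ'
end generic

section part2
variable {m : ℕ} {s : Fin (m + 3) → Equiv.Perm (ℕ × Fin (m + 3))}
  {S : Subgroup (Equiv.Perm (ℕ × Fin (m + 3)))}
variable (hs0 : ∀ i : Fin (m + 3), s i (0, i) = (0, i + 1))
  (hs1 : ∀ (i : Fin (m + 3)) (k : ℕ), s i (k + 1, i) = (k, i))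
  (hs2 : ∀ (i : Fin (m + 3)) (k : ℕ), s i (k, i + 1) = (k + 1, i + 1))
  (hs3 : ∀ (i : Fin (m + 3)) (k : ℕ) (l : Fin (m + 3)),
      l ≠ i → l ≠ i + 1 → s i (k, l) = (k, l))
  (hmem : ∀ i, s i ∈ S)

include hs0 hs1 hs2 hs3 hmem

lemma swap0_mem (i : Fin (m + 3)) :
    Equiv.swap ((0 : ℕ), i) ((0 : ℕ), i + 1) ∈ S := by
  rw [← comm_eq_swap hs0 hs1 hs2 hs3 i]
  exact S.mul_mem (S.mul_mem (S.mul_mem (S.inv_mem (hmem i)) (S.inv_mem (hmem (i+1))))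
    (hmem i)) (hmem (i+1))

omit hs0 hs2 hs3 hmem in
lemma pow_sinv (i : Fin (m + 3)) : ∀ (j k : ℕ), (((s i)⁻¹)^j) (k, i) = (k + j, i) := by
  intro j
  induction j with
  | zero => intro k; simp
  | succ j ih =>
      intro k
      rw [pow_succ, Equiv.Perm.mul_apply, sinv1 hs1, ih]
      congr 1
      omega

lemma swap_adj_mem (i : Fin (m + 3)) (k : ℕ) :
    Equiv.swap (((k+1 : ℕ), i) : ℕ × Fin (m+3)) ((k, i) : ℕ × Fin (m+3)) ∈ S := by
  have hw : ((s i)⁻¹)^(k+1) ∈ S := S.pow_mem (S.inv_mem (hmem i)) _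
  have h1 : (((s i)⁻¹)^(k+1)) ((0 : ℕ), i) = ((k+1 : ℕ), i) := by
    rw [pow_sinv hs1]
    congr 1
    omega
  have h2 : (((s i)⁻¹)^(k+1)) ((0 : ℕ), i+1) = ((k : ℕ), i) := by
    rw [pow_succ, Equiv.Perm.mul_apply, sinv0 hs0, pow_sinv hs1]
    congr 1
    omega
  have := swap_conj_mem hw (swap0_mem hs0 hs1 hs2 hs3 hmem i)
  rwa [h1, h2] at this

lemma rel_down (k : ℕ) (l : Fin (m + 3)) : srel S ((k, l) : ℕ × Fin (m+3)) ((0 : ℕ), l) := by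
  induction k with
  | zero => exact srel_refl _
  | succ k ih => exact srel_trans (Or.inr (swap_adj_mem hs0 hs1 hs2 hs3 hmem l k)) ih

open Fin.CommRing Fin.NatCast in
lemma rel_ray (l : Fin (m + 3)) (j : ℕ) :
    srel S (((0 : ℕ), l) : ℕ × Fin (m+3)) ((0 : ℕ), l + (j : Fin (m + 3))) := by
  induction j with
  | zero => rw [Nat.cast_zero, add_zero]; exact srel_refl _
  | succ j ih =>
      have step : srel S (((0 : ℕ), l + (j : Fin (m+3))) : ℕ × Fin (m+3))
          ((0 : ℕ), l + (j : Fin (m+3)) + 1) :=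
        Or.inr (swap0_mem hs0 hs1 hs2 hs3 hmem _)
      have : ((j+1 : ℕ) : Fin (m + 3)) = (j : Fin (m+3)) + 1 := by push_cast; ring
      rw [this, ← add_assoc]
      exact srel_trans ih step

open Fin.CommRing Fin.NatCast in
lemma rel_all (p q : ℕ × Fin (m + 3)) : srel S p q := by
  obtain ⟨k, l⟩ := p
  obtain ⟨k', l'⟩ := q
  have e : l + (((l' - l).val : ℕ) : Fin (m+3)) = l' := by
    rw [Fin.cast_val_eq_self]; ring
  refine srel_trans (rel_down hs0 hs1 hs2 hs3 hmem k l) (srel_trans ?_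
    (srel_symm (rel_down hs0 hs1 hs2 hs3 hmem k' l')))
  have := rel_ray hs0 hs1 hs2 hs3 hmem l (l' - l).val
  rwa [e] at this

lemma swap_any_mem {a b : ℕ × Fin (m + 3)} (h : a ≠ b) : Equiv.swap a b ∈ S :=
  srel_swap_mem (rel_all hs0 hs1 hs2 hs3 hmem a b) h

lemma finitary_mem {φ : Equiv.Perm (ℕ × Fin (m + 3))} (hf : {p | φ p ≠ p}.Finite) :
    φ ∈ S := by
  refine finitary_mem_of_swaps (fun a b h => swap_any_mem hs0 hs1 hs2 hs3 hmem h)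
    hf.toFinset.card φ hf.toFinset le_rfl ?_
  rw [Set.Finite.coe_toFinset]

end part2

lemma hprop_single {n : ℕ} {ρ : Equiv.Perm (ℕ × Fin n)} {r : Fin n → ℤ}
    (hr : hprop ρ r) (l₀ : Fin n) (h0 : ∀ l, l ≠ l₀ → r l = 0) : r l₀ = 0 := by
  rcases lt_trichotomy (r l₀) 0 with h | h | h
  · exact absurd (hprop_neg_absurd hr l₀ h0 h) (fun x => x)
  · exact h
  · exfalso
    refine hprop_neg_absurd (hprop_inv hr) l₀ (fun l hl => ?_) (by simp; omega)
    simp [h0 l hl]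

lemma hprop_list_prod {n : ℕ} {ι : Type*} (f : ι → Equiv.Perm (ℕ × Fin n))
    (g : ι → (Fin n → ℤ)) (h : ∀ i, hprop (f i) (g i)) :
    ∀ L : List ι, hprop (L.map f).prod (L.map g).sum := by
  intro L
  induction L with
  | nil => simpa using hprop_one
  | cons i L ih =>
      rw [List.map_cons, List.map_cons, List.prod_cons, List.sum_cons]
      exact hprop_mul (h i) ih


section part3
variable {m : ℕ} {s : Fin (m + 3) → Equiv.Perm (ℕ × Fin (m + 3))}
  {S : Subgroup (Equiv.Perm (ℕ × Fin (m + 3)))}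
variable (hs0 : ∀ i : Fin (m + 3), s i (0, i) = (0, i + 1))
  (hs1 : ∀ (i : Fin (m + 3)) (k : ℕ), s i (k + 1, i) = (k, i))
  (hs2 : ∀ (i : Fin (m + 3)) (k : ℕ), s i (k, i + 1) = (k + 1, i + 1))
  (hs3 : ∀ (i : Fin (m + 3)) (k : ℕ) (l : Fin (m + 3)),
      l ≠ i → l ≠ i + 1 → s i (k, l) = (k, l))
  (hmem : ∀ i, s i ∈ S)

/-- the translation vector of the shift `s i` -/
def vfun {m : ℕ} (i : Fin (m + 3)) : Fin (m + 3) → ℤ :=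
  fun l => if l = i then (-1 : ℤ) else if l = i + 1 then 1 else 0

include hs1 hs2 hs3 in
lemma hprop_s (i : Fin (m + 3)) : hprop (s i) (vfun i) := by
  apply Set.Finite.subset (Set.finite_singleton ((0 : ℕ), i))
  intro p hp
  by_contra hne
  apply hp
  obtain ⟨k, l⟩ := p
  have hne' : ¬(k = 0 ∧ l = i) := by
    intro ⟨h1, h2⟩; exact hne (by simp [h1, h2])
  by_cases hl : l = i
  · subst hl
    obtain ⟨k', rfl⟩ : ∃ k', k = k' + 1 := by
      rcases k with _ | k'
      · exact absurd ⟨rfl, rfl⟩ hne'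
      · exact ⟨k', rfl⟩
    constructor
    · show (0 : ℤ) ≤ (k' + 1 : ℕ) + vfun l l
      simp only [vfun, if_pos rfl]
      push_cast
      omega
    · show s l (k' + 1, l) = _
      rw [hs1 l k']
      have hvv : ((k' + 1 : ℕ) : ℤ) + vfun l l = ((k' : ℕ) : ℤ) := by
        simp only [vfun, if_pos rfl]
        push_cast
        omega
      rw [hvv, Int.toNat_natCast]
  · by_cases hl2 : l = i + 1
    · subst hl2
      have hv : vfun i (i + 1) = 1 := by
        simp [vfun, finp1 i]
      constructor
      · rw [hv]; positivity
      · show s i (k, i + 1) = _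
        rw [hs2 i k, hv]
        have : ((k : ℤ) + 1).toNat = k + 1 := by omega
        rw [this]
    · have hv : vfun i l = 0 := by simp only [vfun, if_neg hl, if_neg hl2]
      constructor
      · rw [hv]; simp
      · rw [hs3 i k l hl hl2, hv]
        simp

include hs0 hs1 hs2 hs3 hmem in
open Fin.CommRing Fin.NatCast in
lemma houghton_mem (φ : Equiv.Perm (ℕ × Fin (m + 3))) (t : Fin (m + 3) → ℤ)
    (ht : hprop φ t) : φ ∈ S := by
  classical
  -- partial-sum function
  set A : ℕ → ℤ := fun v => ∑ j ∈ Finset.Icc 1 v, t ((j : ℕ) : Fin (m + 3)) with hA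
  set a : Fin (m + 3) → ℤ := fun i => -(A i.val) with ha
  set ψ : Equiv.Perm (ℕ × Fin (m + 3)) :=
    ((List.finRange (m + 3)).map (fun i => (s i) ^ (a i))).prod with hψ
  set w : Fin (m + 3) → ℤ := ∑ i, a i • vfun i with hw
  have hψS : ψ ∈ S := by
    apply Subgroup.list_prod_mem
    intro x hx
    rw [List.mem_map] at hx
    obtain ⟨i, _, rfl⟩ := hx
    exact S.zpow_mem (hmem i) (a i)
  have hψprop : hprop ψ w := by
    have := hprop_list_prod (fun i => (s i) ^ (a i)) (fun i => a i • vfun i)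
      (fun i => hprop_zpow (hprop_s hs1 hs2 hs3 i) (a i)) (List.finRange (m + 3))
    rw [hψ, hw, Fin.sum_univ_def]
    exact this
  have w_apply : ∀ i : Fin (m + 3), w (i + 1) = a i - a (i + 1) := by
    intro i
    rw [hw, Finset.sum_apply]
    have key : ∀ j : Fin (m + 3), (a j • vfun j) (i + 1)
        = (if j = i then a i else 0) + (if j = i + 1 then -(a (i + 1)) else 0) := by
      intro j
      simp only [Pi.smul_apply, smul_eq_mul, vfun]
      by_cases h1 : j = i
      · have c0 : ¬(i + 1 = j) := fun h => finp1 i (h.trans h1)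
        have c1 : i + 1 = j + 1 := by rw [h1]
        have c2 : ¬(j = i + 1) := fun hh => finp1 i (h1.symm.trans hh).symm
        rw [if_neg c0, if_pos c1, if_pos h1, if_neg c2, h1]
        ring
      · by_cases h2 : j = i + 1
        · rw [if_pos h2.symm, if_neg h1, if_pos h2, h2]
          ring
        · have e0 : ¬(i + 1 = j) := fun h => h2 h.symm
          have e1 : ¬(i + 1 = j + 1) := fun h => h1 (((add_left_inj 1).mp h).symm)
          rw [if_neg e0, if_neg e1, if_neg h1, if_neg h2]
          ring
    rw [Finset.sum_congr rfl (fun j _ => key j), Finset.sum_add_distrib,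
      Finset.sum_ite_eq' Finset.univ i (fun j => a i),
      Finset.sum_ite_eq' Finset.univ (i + 1) (fun j => -(a (i + 1)))]
    simp only [Finset.mem_univ, if_pos]
    ring
  -- w agrees with t away from 0
  have hagree : ∀ l : Fin (m + 3), l ≠ 0 → w l = t l := by
    intro l hl
    have hval : l.val ≠ 0 := fun h => hl (Fin.ext (by simp [h]))
    obtain ⟨v, hv⟩ : ∃ v, l.val = v + 1 := ⟨l.val - 1, by omega⟩
    have hl1 : l = (l - 1) + 1 := by ring
    have hsub : (l - 1).val = v := by
      rw [Fin.coe_sub_one, if_neg hl, hv]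
      omega
    rw [hl1, w_apply (l - 1), ha]
    simp only [hsub, ← hl1, hv]
    rw [hA]
    simp only
    rw [Finset.sum_Icc_succ_top (by omega : 1 ≤ v + 1)]
    have : ((v + 1 : ℕ) : Fin (m + 3)) = l := by
      rw [← hv, Fin.cast_val_eq_self]
    rw [this]
    ring
  -- the residual permutation
  have hres : hprop (φ * ψ⁻¹) (t + (-w)) := hprop_mul ht (hprop_inv hψprop)
  have hzero : t + (-w) = 0 := by
    have h0 : ∀ l, l ≠ (0 : Fin (m + 3)) → (t + (-w)) l = 0 := by
      intro l hl
      simp [hagree l hl]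
    have := hprop_single hres 0 h0
    funext l
    by_cases hl : l = 0
    · rw [hl]; exact this
    · exact h0 l hl
  rw [hzero] at hres
  have hfin : {p : ℕ × Fin (m + 3) | (φ * ψ⁻¹) p ≠ p}.Finite := by
    apply Set.Finite.subset hres
    intro p hp hgood
    apply hp
    obtain ⟨h1, h2⟩ := hgood
    rw [h2]
    simp
  have : φ * ψ⁻¹ ∈ S := finitary_mem hs0 hs1 hs2 hs3 hmem hfin
  have hfinal : φ = (φ * ψ⁻¹) * ψ := by group
  rw [hfinal]
  exact S.mul_mem this hψS

end part3


def houghtonSubgroup (n : ℕ) : Subgroup (Equiv.Perm (ℕ × Fin n)) where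
  carrier := houghtonSet n
  one_mem' := ⟨0, hprop_one⟩
  mul_mem' := by rintro a b ⟨t, ht⟩ ⟨u, hu⟩; exact ⟨t + u, hprop_mul ht hu⟩
  inv_mem' := by rintro a ⟨t, ht⟩; exact ⟨-t, hprop_inv ht⟩

/-- For `n ≥ 3` (written `n = m + 3`) the Houghton group `H_n` is generated by
the shifts `s_1, …, s_n` (here specified by their defining action, ray indices
taken mod `n`): the commutator `[s_i, s_{i+1}] = s_i⁻¹ s_{i+1}⁻¹ s_i s_{i+1}`
acts as the transposition of `(0, i)` and `(0, i+1)`, hence the subgroup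
generated by the shifts contains all finitary permutations and equals `H_n`. -/
theorem houghton_generated_by_shifts (m : ℕ)
    (s : Fin (m + 3) → Equiv.Perm (ℕ × Fin (m + 3)))
    (hs0 : ∀ i : Fin (m + 3), s i (0, i) = (0, i + 1))
    (hs1 : ∀ (i : Fin (m + 3)) (k : ℕ), s i (k + 1, i) = (k, i))
    (hs2 : ∀ (i : Fin (m + 3)) (k : ℕ), s i (k, i + 1) = (k + 1, i + 1))
    (hs3 : ∀ (i : Fin (m + 3)) (k : ℕ) (l : Fin (m + 3)),
      l ≠ i → l ≠ i + 1 → s i (k, l) = (k, l)) :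
    (∀ i : Fin (m + 3), (s i)⁻¹ * (s (i + 1))⁻¹ * s i * s (i + 1)
        = Equiv.swap ((0 : ℕ), i) ((0 : ℕ), i + 1)) ∧
    (∀ φ : Equiv.Perm (ℕ × Fin (m + 3)), {p : ℕ × Fin (m + 3) | φ p ≠ p}.Finite →
        φ ∈ Subgroup.closure (Set.range s)) ∧
    ((Subgroup.closure (Set.range s) : Set (Equiv.Perm (ℕ × Fin (m + 3))))
        = houghtonSet (m + 3)) := by
  refine ⟨comm_eq_swap hs0 hs1 hs2 hs3, ?_, ?_⟩
  · intro φ hf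
    exact finitary_mem hs0 hs1 hs2 hs3 (fun i => Subgroup.subset_closure (Set.mem_range_self i)) hf
  · apply Set.Subset.antisymm
    · intro φ hφ
      have hle : Subgroup.closure (Set.range s) ≤ houghtonSubgroup (m + 3) :=
        (Subgroup.closure_le _).mpr
          (by rintro x ⟨i, rfl⟩; exact ⟨vfun i, hprop_s hs1 hs2 hs3 i⟩)
      exact hle hφ
    · rintro φ ⟨t, ht⟩
      exact houghton_mem hs0 hs1 hs2 hs3 (fun i => Subgroup.subset_closure (Set.mem_range_self i)) φ t ht
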